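/- Cut-free completeness of Ldm_n^m L: for every formula φ ∈ L^m, if φ is valid on all Ldm_n^m-models (⊩ φ), then for any label x the labelled sequent x:φ is derivable in the calculus Ldm_n^m L. -/
import Mathlib


namespace Stit

/-- Formulas of the language `L^m` (negation normal form), with agents `Fin m`
and propositional variables indexed by `ℕ`. -/
inductive Fml (m : ℕ) : Type
  | pos : ℕ → Fml m                  -- p
  | neg : ℕ → Fml m                  -- p̄
  | and : Fml m → Fml m → Fml m      -- φ ∧ ψ
  | or  : Fml m → Fml m → Fml m      -- φ ∨ ψ
  | box : Fml m → Fml m              -- □φ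
  | dia : Fml m → Fml m              -- ◇φ
  | ag  : Fin m → Fml m → Fml m      -- [i]φ
  | dag : Fin m → Fml m → Fml m      -- ⟨i⟩φ

namespace Fml

/-- Negation `φ̄`: replace every connective/modality by its dual and swap `p` with `p̄`. -/
def negF {m : ℕ} : Fml m → Fml m
  | pos p => neg p
  | neg p => pos p
  | and φ ψ => or φ.negF ψ.negF
  | or φ ψ => and φ.negF ψ.negF
  | box φ => dia φ.negF
  | dia φ => box φ.negF
  | ag i φ => dag i φ.negF
  | dag i φ => ag i φ.negF

/-- `φ → ψ` abbreviates `φ̄ ∨ ψ`. -/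
def impF {m : ℕ} (φ ψ : Fml m) : Fml m := or φ.negF ψ

end Fml

/-- `f 0 ∧ f 1 ∧ ⋯ ∧ f k` (left-associated). -/
def conjUpTo {m : ℕ} (f : ℕ → Fml m) : ℕ → Fml m
  | 0 => f 0
  | k+1 => Fml.and (conjUpTo f k) (f (k+1))

/-- `f 0 ∨ f 1 ∨ ⋯ ∨ f k` (left-associated). -/
def disjUpTo {m : ℕ} (f : ℕ → Fml m) : ℕ → Fml m
  | 0 => f 0
  | k+1 => Fml.or (disjUpTo f k) (f (k+1))

/-- `(f 0)̄ ∧ ((f 1)̄ ∧ ⋯ ((f (j-1))̄ ∧ base))`. -/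
def prefNegConj {m : ℕ} (f : ℕ → Fml m) : ℕ → Fml m → Fml m
  | 0, base => base
  | j+1, base => prefNegConj f j (Fml.and (f j).negF base)

/-- The antecedent `◇[i]φ_0 ∧ ◇(φ̄_0 ∧ [i]φ_1) ∧ ⋯ ∧ ◇(φ̄_0 ∧ ⋯ ∧ φ̄_{n'-1} ∧ [i]φ_{n'})`
of the (n'+1)-choice axiom. -/
def apcAnte {m : ℕ} (i : Fin m) (f : ℕ → Fml m) (n' : ℕ) : Fml m :=
  conjUpTo (fun j => Fml.dia (prefNegConj f j (Fml.ag i (f j)))) n'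

/-- The n-choice axiom `APC_n^i` for `n = n' + 1` choices `φ_0, …, φ_{n'}`. -/
def apcAx {m : ℕ} (i : Fin m) (f : ℕ → Fml m) (n' : ℕ) : Fml m :=
  (apcAnte i f n').impF (disjUpTo f n')

def diaAgIdx {m : ℕ} (f : Fin m → Fml m) (j : ℕ) : Fml m :=
  if h : j < m then Fml.dia (Fml.ag ⟨j, h⟩ (f ⟨j, h⟩)) else Fml.pos 0

def agIdx {m : ℕ} (f : Fin m → Fml m) (j : ℕ) : Fml m :=
  if h : j < m then Fml.ag ⟨j, h⟩ (f ⟨j, h⟩) else Fml.pos 0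

/-- The independence-of-agents axiom `⋀_{i∈Ag} ◇[i]φ_i → ◇(⋀_{i∈Ag} [i]φ_i)`
(for `m ≥ 1` agents). -/
def ioaAx {m : ℕ} (f : Fin m → Fml m) : Fml m :=
  (conjUpTo (diaAgIdx f) (m-1)).impF (Fml.dia (conjUpTo (agIdx f) (m-1)))

/-- An `Ldm_n^m`-model on the carrier `W`: each `rel i` is an equivalence relation (C1),
independence of agents (C2), the `n`-choice condition when `n > 0` (C3), plus a valuation. -/
structure ModelOn (n m : ℕ) (W : Type) : Type where
  nonemp : Nonempty W
  rel : Fin m → W → W → Prop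
  refl : ∀ i w, rel i w w
  symm : ∀ i w u, rel i w u → rel i u w
  trans : ∀ i w u v, rel i w u → rel i u v → rel i w v
  ioa : ∀ u : Fin m → W, ∃ v, ∀ i, rel i (u i) v
  apc : 0 < n → ∀ (i : Fin m) (w : Fin (n+1) → W),
      ∃ k j : Fin (n+1), k < j ∧ rel i (w k) (w j)
  val : ℕ → Set W

/-- Satisfaction `M, w ⊩ φ`. -/
def Sat {n m : ℕ} {W : Type} (M : ModelOn n m W) : W → Fml m → Prop
  | w, .pos p => w ∈ M.val p
  | w, .neg p => w ∉ M.val p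
  | w, .and φ ψ => Sat M w φ ∧ Sat M w ψ
  | w, .or φ ψ => Sat M w φ ∨ Sat M w ψ
  | _, .box φ => ∀ u, Sat M u φ
  | _, .dia φ => ∃ u, Sat M u φ
  | w, .ag i φ => ∀ u, M.rel i w u → Sat M u φ
  | w, .dag i φ => ∃ u, M.rel i w u ∧ Sat M u φ

/-- Validity: `⊩ φ`. -/
def Valid (n m : ℕ) (φ : Fml m) : Prop :=
  ∀ (W : Type) (M : ModelOn n m W) (w : W), Sat M w φ

/-- Semantic consequence `Γ ⊩ φ`. -/
def SemConseq (n m : ℕ) (Γ : Set (Fml m)) (φ : Fml m) : Prop :=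
  ∀ (W : Type) (M : ModelOn n m W) (w : W), (∀ ψ ∈ Γ, Sat M w ψ) → Sat M w φ

/-- The Hilbert calculus `Ldm_n^m`: classical propositional logic, S5 for `□` and each
`[i]`, the bridge axiom, IOA, the n-choice axioms (for `n > 0`), with modus ponens and
necessitation (applied to theorems). `Hderiv n m Γ φ` is `Γ ⊢_{Ldm_n^m} φ`. -/
inductive Hderiv (n m : ℕ) : Set (Fml m) → Fml m → Prop
  | prem {Γ} {φ} (h : φ ∈ Γ) : Hderiv n m Γ φ
  | ax1 {Γ} (φ ψ : Fml m) : Hderiv n m Γ (φ.impF (ψ.impF φ))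
  | ax2 {Γ} (φ ψ χ : Fml m) :
      Hderiv n m Γ ((φ.impF (ψ.impF χ)).impF ((φ.impF ψ).impF (φ.impF χ)))
  | ax3 {Γ} (φ ψ : Fml m) :
      Hderiv n m Γ ((ψ.negF.impF φ.negF).impF (φ.impF ψ))
  | boxK {Γ} (φ ψ : Fml m) :
      Hderiv n m Γ ((Fml.box (φ.impF ψ)).impF ((Fml.box φ).impF (Fml.box ψ)))
  | boxT {Γ} (φ : Fml m) : Hderiv n m Γ ((Fml.box φ).impF φ)
  | box5 {Γ} (φ : Fml m) : Hderiv n m Γ ((Fml.dia φ).impF (Fml.box (Fml.dia φ)))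
  | boxDual {Γ} (φ : Fml m) : Hderiv n m Γ (Fml.or (Fml.box φ) (Fml.dia φ.negF))
  | agK {Γ} (i : Fin m) (φ ψ : Fml m) :
      Hderiv n m Γ ((Fml.ag i (φ.impF ψ)).impF ((Fml.ag i φ).impF (Fml.ag i ψ)))
  | agT {Γ} (i : Fin m) (φ : Fml m) : Hderiv n m Γ ((Fml.ag i φ).impF φ)
  | ag5 {Γ} (i : Fin m) (φ : Fml m) :
      Hderiv n m Γ ((Fml.dag i φ).impF (Fml.ag i (Fml.dag i φ)))
  | agDual {Γ} (i : Fin m) (φ : Fml m) :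
      Hderiv n m Γ (Fml.or (Fml.ag i φ) (Fml.dag i φ.negF))
  | bridge {Γ} (i : Fin m) (φ : Fml m) :
      Hderiv n m Γ ((Fml.box φ).impF (Fml.ag i φ))
  | ioa {Γ} (f : Fin m → Fml m) : Hderiv n m Γ (ioaAx f)
  | apc {Γ} (hn : 0 < n) (i : Fin m) (f : ℕ → Fml m) :
      Hderiv n m Γ (apcAx i f (n-1))
  | mp {Γ} {φ ψ} : Hderiv n m Γ (φ.impF ψ) → Hderiv n m Γ φ → Hderiv n m Γ ψ
  | nec {Γ} {φ} : Hderiv n m ∅ φ → Hderiv n m Γ (Fml.box φ)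

/-- A relational atom `R_i x y`. -/
abbrev RAtom (m : ℕ) : Type := Fin m × ℕ × ℕ
/-- The relational part of a labelled sequent: a multiset of relational atoms. -/
abbrev RAtoms (m : ℕ) : Type := Multiset (RAtom m)
/-- A labelled formula `x : φ`. -/
abbrev LFml (m : ℕ) : Type := ℕ × Fml m
/-- The formula part of a labelled sequent: a multiset of labelled formulas. -/
abbrev LFmls (m : ℕ) : Type := Multiset (LFml m)

/-- The label `v` does not occur in the labelled sequent `R, Γ` (eigenvariable condition). -/
def freshIn {m : ℕ} (v : ℕ) (R : RAtoms m) (Γ : LFmls m) : Prop :=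
  (∀ a ∈ R, a.2.1 ≠ v ∧ a.2.2 ≠ v) ∧ ∀ e ∈ Γ, e.1 ≠ v

/-- `Reach R i w u`: `u` is `i`-reachable from `w`, i.e. there is a (possibly empty)
path of `R_i`-atoms of `R` (traversed in either direction) connecting `w` to `u`. -/
inductive Reach {m : ℕ} (R : RAtoms m) (i : Fin m) : ℕ → ℕ → Prop
  | refl (w : ℕ) : Reach R i w w
  | fwd {w u v : ℕ} : Reach R i w u → ((i, u, v) : RAtom m) ∈ R → Reach R i w v
  | bwd {w u v : ℕ} : Reach R i w u → ((i, v, u) : RAtom m) ∈ R → Reach R i w v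

/-- The relational atoms `R_1 u_1 v, …, R_m u_m v` used by the rule (IOA). -/
def ioaAtoms {m : ℕ} (u : Fin m → ℕ) (v : ℕ) : RAtoms m :=
  Multiset.ofList ((List.finRange m).map fun i => ((i, u i, v) : RAtom m))

/-- Which optional rules are present in a labelled calculus, and whether the
`[i]`-rule keeps its principal formula in the premise. -/
structure Flags : Type where
  refl : Bool    -- (refl_i)
  eucl : Bool    -- (eucl_i)
  diaAg : Bool   -- (⟨i⟩)
  pr : Bool      -- (Pr_i)
  ioa : Bool     -- (IOA)
  agKeep : Bool  -- premise of ([i]) keeps w:[i]φ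

/-- `SeqH fl n m h R Γ`: the labelled sequent `R, Γ` has a derivation of height at most
`h` in the labelled calculus determined by `fl` (with parameters `n`, `m`). -/
inductive SeqH (fl : Flags) (n m : ℕ) : ℕ → RAtoms m → LFmls m → Prop
  | id {h : ℕ} {R : RAtoms m} {Γ : LFmls m} (w p : ℕ) :
      SeqH fl n m h R ((w, Fml.pos p) ::ₘ (w, Fml.neg p) ::ₘ Γ)
  | andR {h R Γ} {w : ℕ} {φ ψ : Fml m} :
      SeqH fl n m h R ((w, Fml.and φ ψ) ::ₘ (w, φ) ::ₘ Γ) →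
      SeqH fl n m h R ((w, Fml.and φ ψ) ::ₘ (w, ψ) ::ₘ Γ) →
      SeqH fl n m (h+1) R ((w, Fml.and φ ψ) ::ₘ Γ)
  | orR {h R Γ} {w : ℕ} {φ ψ : Fml m} :
      SeqH fl n m h R ((w, Fml.or φ ψ) ::ₘ (w, φ) ::ₘ (w, ψ) ::ₘ Γ) →
      SeqH fl n m (h+1) R ((w, Fml.or φ ψ) ::ₘ Γ)
  | boxR {h R Γ} {w v : ℕ} {φ : Fml m}
      (hv : freshIn v R ((w, Fml.box φ) ::ₘ Γ)) :
      SeqH fl n m h R ((w, Fml.box φ) ::ₘ (v, φ) ::ₘ Γ) →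
      SeqH fl n m (h+1) R ((w, Fml.box φ) ::ₘ Γ)
  | diaR {h R Γ} {w u : ℕ} {φ : Fml m} :
      SeqH fl n m h R ((w, Fml.dia φ) ::ₘ (u, φ) ::ₘ Γ) →
      SeqH fl n m (h+1) R ((w, Fml.dia φ) ::ₘ Γ)
  | agR {h R Γ} {w v : ℕ} {i : Fin m} {φ : Fml m} (hfl : fl.agKeep = false)
      (hv : freshIn v R ((w, Fml.ag i φ) ::ₘ Γ)) :
      SeqH fl n m h (((i, w, v) : RAtom m) ::ₘ R) ((v, φ) ::ₘ Γ) →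
      SeqH fl n m (h+1) R ((w, Fml.ag i φ) ::ₘ Γ)
  | agRKeep {h R Γ} {w v : ℕ} {i : Fin m} {φ : Fml m} (hfl : fl.agKeep = true)
      (hv : freshIn v R ((w, Fml.ag i φ) ::ₘ Γ)) :
      SeqH fl n m h (((i, w, v) : RAtom m) ::ₘ R) ((w, Fml.ag i φ) ::ₘ (v, φ) ::ₘ Γ) →
      SeqH fl n m (h+1) R ((w, Fml.ag i φ) ::ₘ Γ)
  | dagR {h R Γ} {w u : ℕ} {i : Fin m} {φ : Fml m} (hfl : fl.diaAg = true) :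
      SeqH fl n m h (((i, w, u) : RAtom m) ::ₘ R) ((w, Fml.dag i φ) ::ₘ (u, φ) ::ₘ Γ) →
      SeqH fl n m (h+1) (((i, w, u) : RAtom m) ::ₘ R) ((w, Fml.dag i φ) ::ₘ Γ)
  | reflR {h R Γ} {i : Fin m} {w : ℕ} (hfl : fl.refl = true) :
      SeqH fl n m h (((i, w, w) : RAtom m) ::ₘ R) Γ →
      SeqH fl n m (h+1) R Γ
  | euclR {h R Γ} {i : Fin m} {w u v : ℕ} (hfl : fl.eucl = true) :
      SeqH fl n m h (((i, w, u) : RAtom m) ::ₘ ((i, w, v) : RAtom m) ::ₘ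
        ((i, u, v) : RAtom m) ::ₘ R) Γ →
      SeqH fl n m (h+1) (((i, w, u) : RAtom m) ::ₘ ((i, w, v) : RAtom m) ::ₘ R) Γ
  | ioaR {h R Γ} (hfl : fl.ioa = true) (u : Fin m → ℕ) (v : ℕ) (hv : freshIn v R Γ) :
      SeqH fl n m h (ioaAtoms u v + R) Γ →
      SeqH fl n m (h+1) R Γ
  | apcR {h R Γ} (hn : 0 < n) (i : Fin m) (w : Fin (n+1) → ℕ) :
      (∀ k j : Fin (n+1), k < j → SeqH fl n m h (((i, w k, w j) : RAtom m) ::ₘ R) Γ) →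
      SeqH fl n m (h+1) R Γ
  | prR {h R Γ} {w u : ℕ} {i : Fin m} {φ : Fml m} (hfl : fl.pr = true)
      (hreach : Reach R i w u) :
      SeqH fl n m h R ((w, Fml.dag i φ) ::ₘ (u, φ) ::ₘ Γ) →
      SeqH fl n m (h+1) R ((w, Fml.dag i φ) ::ₘ Γ)

/-- Derivability (of some height) in the labelled calculus determined by `fl`. -/
def Seq (fl : Flags) (n m : ℕ) (R : RAtoms m) (Γ : LFmls m) : Prop :=
  ∃ h, SeqH fl n m h R Γ

/-- The calculus `G3Ldm_n^m`. -/
def G3flags : Flags := ⟨true, true, true, false, true, false⟩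
/-- The calculus `G3Ldm_n^m + PR`. -/
def G3PRflags : Flags := ⟨true, true, true, true, true, false⟩
/-- `G3Ldm_n^m + PR` without the rules `(refl_i)`. -/
def G3PRnoReflFlags : Flags := ⟨false, true, true, true, true, false⟩
/-- `G3Ldm_n^m + PR` without the rules `(eucl_i)`. -/
def G3PRnoEuclFlags : Flags := ⟨true, false, true, true, true, false⟩
/-- The refined calculus `Ldm_n^m L`. -/
def LdmLflags : Flags := ⟨false, false, false, true, true, true⟩
/-- The refined single-agent calculus `Ldm_n^1 L` (no (IOA)). -/
def LdmL1flags : Flags := ⟨false, false, false, true, false, true⟩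

/-- Substitution of the label `y` for the label `x`. -/
def substLab (x y v : ℕ) : ℕ := if v = x then y else v

def substR {m : ℕ} (x y : ℕ) (R : RAtoms m) : RAtoms m :=
  R.map fun a => (a.1, substLab x y a.2.1, substLab x y a.2.2)

def substF {m : ℕ} (x y : ℕ) (Γ : LFmls m) : LFmls m :=
  Γ.map fun e => (substLab x y e.1, e.2)

/-- Height-preserving invertibility of every inference rule of the calculus given by `fl`. -/
def InvertAll (fl : Flags) (n m : ℕ) : Prop :=
  (∀ h R Γ (w : ℕ) (φ ψ : Fml m), SeqH fl n m h R ((w, Fml.and φ ψ) ::ₘ Γ) →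
     SeqH fl n m h R ((w, Fml.and φ ψ) ::ₘ (w, φ) ::ₘ Γ) ∧
     SeqH fl n m h R ((w, Fml.and φ ψ) ::ₘ (w, ψ) ::ₘ Γ)) ∧
  (∀ h R Γ (w : ℕ) (φ ψ : Fml m), SeqH fl n m h R ((w, Fml.or φ ψ) ::ₘ Γ) →
     SeqH fl n m h R ((w, Fml.or φ ψ) ::ₘ (w, φ) ::ₘ (w, ψ) ::ₘ Γ)) ∧
  (∀ h R Γ (w v : ℕ) (φ : Fml m), freshIn v R ((w, Fml.box φ) ::ₘ Γ) →
     SeqH fl n m h R ((w, Fml.box φ) ::ₘ Γ) →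
     SeqH fl n m h R ((w, Fml.box φ) ::ₘ (v, φ) ::ₘ Γ)) ∧
  (∀ h R Γ (w u : ℕ) (φ : Fml m), SeqH fl n m h R ((w, Fml.dia φ) ::ₘ Γ) →
     SeqH fl n m h R ((w, Fml.dia φ) ::ₘ (u, φ) ::ₘ Γ)) ∧
  (fl.agKeep = false → ∀ h R Γ (w v : ℕ) (i : Fin m) (φ : Fml m),
     freshIn v R ((w, Fml.ag i φ) ::ₘ Γ) →
     SeqH fl n m h R ((w, Fml.ag i φ) ::ₘ Γ) →
     SeqH fl n m h (((i, w, v) : RAtom m) ::ₘ R) ((v, φ) ::ₘ Γ)) ∧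
  (fl.agKeep = true → ∀ h R Γ (w v : ℕ) (i : Fin m) (φ : Fml m),
     freshIn v R ((w, Fml.ag i φ) ::ₘ Γ) →
     SeqH fl n m h R ((w, Fml.ag i φ) ::ₘ Γ) →
     SeqH fl n m h (((i, w, v) : RAtom m) ::ₘ R) ((w, Fml.ag i φ) ::ₘ (v, φ) ::ₘ Γ)) ∧
  (fl.diaAg = true → ∀ h R Γ (w u : ℕ) (i : Fin m) (φ : Fml m),
     SeqH fl n m h (((i, w, u) : RAtom m) ::ₘ R) ((w, Fml.dag i φ) ::ₘ Γ) →
     SeqH fl n m h (((i, w, u) : RAtom m) ::ₘ R) ((w, Fml.dag i φ) ::ₘ (u, φ) ::ₘ Γ)) ∧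
  (fl.refl = true → ∀ h R Γ (i : Fin m) (w : ℕ), SeqH fl n m h R Γ →
     SeqH fl n m h (((i, w, w) : RAtom m) ::ₘ R) Γ) ∧
  (fl.eucl = true → ∀ h R Γ (i : Fin m) (w u v : ℕ),
     SeqH fl n m h (((i, w, u) : RAtom m) ::ₘ ((i, w, v) : RAtom m) ::ₘ R) Γ →
     SeqH fl n m h (((i, w, u) : RAtom m) ::ₘ ((i, w, v) : RAtom m) ::ₘ
       ((i, u, v) : RAtom m) ::ₘ R) Γ) ∧
  (fl.ioa = true → ∀ h R Γ (u : Fin m → ℕ) (v : ℕ), freshIn v R Γ →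
     SeqH fl n m h R Γ → SeqH fl n m h (ioaAtoms u v + R) Γ) ∧
  (0 < n → ∀ h R Γ (i : Fin m) (w : Fin (n+1) → ℕ) (k j : Fin (n+1)), k < j →
     SeqH fl n m h R Γ → SeqH fl n m h (((i, w k, w j) : RAtom m) ::ₘ R) Γ) ∧
  (fl.pr = true → ∀ h R Γ (w u : ℕ) (i : Fin m) (φ : Fml m), Reach R i w u →
     SeqH fl n m h R ((w, Fml.dag i φ) ::ₘ Γ) →
     SeqH fl n m h R ((w, Fml.dag i φ) ::ₘ (u, φ) ::ₘ Γ))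

/-- A labelled sequent `R, Γ` is satisfied in `M` under the interpretation `I`. -/
def SeqSat {n m : ℕ} {W : Type} (M : ModelOn n m W) (I : ℕ → W)
    (R : RAtoms m) (Γ : LFmls m) : Prop :=
  (∀ a ∈ R, M.rel a.1 (I a.2.1) (I a.2.2)) → ∃ e ∈ Γ, Sat M (I e.1) e.2

/-- A labelled sequent is valid: satisfied in every model under every interpretation. -/
def SeqValid (n m : ℕ) (R : RAtoms m) (Γ : LFmls m) : Prop :=
  ∀ (W : Type) (M : ModelOn n m W) (I : ℕ → W), SeqSat M I R Γ
section Aux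
deriving instance DecidableEq for Fml


open Classical

/-- Encoding of formulas into `ℕ`. -/
def Fml.enc {m : ℕ} : Fml m → ℕ
  | .pos p => Nat.pair 0 p
  | .neg p => Nat.pair 1 p
  | .and a b => Nat.pair 2 (Nat.pair a.enc b.enc)
  | .or a b => Nat.pair 3 (Nat.pair a.enc b.enc)
  | .box a => Nat.pair 4 a.enc
  | .dia a => Nat.pair 5 a.enc
  | .ag i a => Nat.pair 6 (Nat.pair i a.enc)
  | .dag i a => Nat.pair 7 (Nat.pair i a.enc)

theorem Fml.enc_inj {m : ℕ} : ∀ a b : Fml m, a.enc = b.enc → a = b := by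
  intro a
  induction a with
  | pos p => intro b h; cases b <;> simp [Fml.enc, Nat.pair_eq_pair] at h <;> simp [h]
  | neg p => intro b h; cases b <;> simp [Fml.enc, Nat.pair_eq_pair] at h <;> simp [h]
  | and a₁ a₂ ih1 ih2 =>
      intro b h; cases b <;> simp [Fml.enc, Nat.pair_eq_pair] at h
      rw [ih1 _ h.1, ih2 _ h.2]
  | or a₁ a₂ ih1 ih2 =>
      intro b h; cases b <;> simp [Fml.enc, Nat.pair_eq_pair] at h
      rw [ih1 _ h.1, ih2 _ h.2]
  | box a ih =>
      intro b h; cases b <;> simp [Fml.enc, Nat.pair_eq_pair] at h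
      rw [ih _ h]
  | dia a ih =>
      intro b h; cases b <;> simp [Fml.enc, Nat.pair_eq_pair] at h
      rw [ih _ h]
  | ag i a ih =>
      intro b h; cases b <;> simp [Fml.enc, Nat.pair_eq_pair] at h
      rw [Fin.ext h.1, ih _ h.2]
  | dag i a ih =>
      intro b h; cases b <;> simp [Fml.enc, Nat.pair_eq_pair] at h
      rw [Fin.ext h.1, ih _ h.2]

instance {m : ℕ} : Countable (Fml m) := ⟨⟨Fml.enc, fun _ _ => Fml.enc_inj _ _⟩⟩

end Aux
/-- Proof-search tasks. -/
inductive Task (n m : ℕ) : Type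
  | tAnd (w : ℕ) (φ ψ : Fml m)
  | tOr (w : ℕ) (φ ψ : Fml m)
  | tBox (w : ℕ) (φ : Fml m)
  | tDia (w : ℕ) (φ : Fml m) (u : ℕ)
  | tAg (w : ℕ) (i : Fin m) (φ : Fml m)
  | tDag (w : ℕ) (i : Fin m) (φ : Fml m) (u : ℕ)
  | tIoa (u : Fin m → ℕ)
  | tApc (i : Fin m) (w : Fin (n+1) → ℕ)

abbrev TaskCode (n m : ℕ) : Type :=
  (ℕ × Fml m × Fml m) ⊕ (ℕ × Fml m × Fml m) ⊕ (ℕ × Fml m) ⊕ (ℕ × Fml m × ℕ) ⊕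
  (ℕ × Fin m × Fml m) ⊕ (ℕ × Fin m × Fml m × ℕ) ⊕ (Fin m → ℕ) ⊕ (Fin m × (Fin (n+1) → ℕ))

def Task.code {n m : ℕ} : Task n m → TaskCode n m
  | .tAnd w φ ψ => .inl (w, φ, ψ)
  | .tOr w φ ψ => .inr (.inl (w, φ, ψ))
  | .tBox w φ => .inr (.inr (.inl (w, φ)))
  | .tDia w φ u => .inr (.inr (.inr (.inl (w, φ, u))))
  | .tAg w i φ => .inr (.inr (.inr (.inr (.inl (w, i, φ)))))
  | .tDag w i φ u => .inr (.inr (.inr (.inr (.inr (.inl (w, i, φ, u))))))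
  | .tIoa u => .inr (.inr (.inr (.inr (.inr (.inr (.inl u))))))
  | .tApc i w => .inr (.inr (.inr (.inr (.inr (.inr (.inr (i, w)))))))

theorem Task.code_inj {n m : ℕ} : Function.Injective (Task.code (n := n) (m := m)) := by
  intro a b h
  cases a <;> cases b <;> simp [Task.code] at h <;> simp_all

instance {n m : ℕ} : Countable (Task n m) := Task.code_inj.countable

instance {n m : ℕ} : Nonempty (Task n m) := ⟨.tBox 0 (.pos 0)⟩

/-- Monotonicity of `Reach` in the relational atoms. -/
theorem Reach.mono {m : ℕ} {R R' : RAtoms m} {i : Fin m} {w u : ℕ}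
    (hle : R ≤ R') (h : Reach R i w u) : Reach R' i w u := by
  induction h with
  | refl => exact .refl _
  | fwd _ hmem ih => exact .fwd ih (Multiset.mem_of_le hle hmem)
  | bwd _ hmem ih => exact .bwd ih (Multiset.mem_of_le hle hmem)

theorem Reach.trans' {m : ℕ} {R : RAtoms m} {i : Fin m} {w u v : ℕ}
    (h1 : Reach R i w u) (h2 : Reach R i u v) : Reach R i w v := by
  induction h2 with
  | refl => exact h1
  | fwd _ hmem ih => exact .fwd ih hmem
  | bwd _ hmem ih => exact .bwd ih hmem

theorem Reach.symm' {m : ℕ} {R : RAtoms m} {i : Fin m} {w u : ℕ}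
    (h : Reach R i w u) : Reach R i u w := by
  induction h with
  | refl => exact .refl _
  | @fwd u v _ hmem ih => exact Reach.trans' (Reach.bwd (Reach.refl v) hmem) ih
  | @bwd u v _ hmem ih => exact Reach.trans' (Reach.fwd (Reach.refl v) hmem) ih

/-- Height monotonicity (one step). -/
theorem SeqH.succ_mono {fl : Flags} {n m h : ℕ} {R : RAtoms m} {Γ : LFmls m}
    (hd : SeqH fl n m h R Γ) : SeqH fl n m (h+1) R Γ := by
  induction hd with
  | id w p => exact .id w p
  | andR _ _ ih1 ih2 => exact .andR ih1 ih2
  | orR _ ih => exact .orR ih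
  | boxR hv _ ih => exact .boxR hv ih
  | diaR _ ih => exact .diaR ih
  | agR hfl hv _ ih => exact .agR hfl hv ih
  | agRKeep hfl hv _ ih => exact .agRKeep hfl hv ih
  | dagR hfl _ ih => exact .dagR hfl ih
  | reflR hfl _ ih => exact .reflR hfl ih
  | euclR hfl _ ih => exact .euclR hfl ih
  | ioaR hfl u v hv _ ih => exact .ioaR hfl u v hv ih
  | apcR hn i w _ ih => exact .apcR hn i w ih
  | prR hfl hreach _ ih => exact .prR hfl hreach ih

theorem SeqH.mono {fl : Flags} {n m h h' : ℕ} {R : RAtoms m} {Γ : LFmls m}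
    (hle : h ≤ h') (hd : SeqH fl n m h R Γ) : SeqH fl n m h' R Γ := by
  induction hle with
  | refl => exact hd
  | step _ ih => exact ih.succ_mono

/-- All labels of a sequent. -/
def seqLabels {m : ℕ} (R : RAtoms m) (Γ : LFmls m) : Multiset ℕ :=
  (R.map fun a => a.2.1) + (R.map fun a => a.2.2) + Γ.map Prod.fst

/-- A fresh label for a sequent. -/
def freshLab {m : ℕ} (R : RAtoms m) (Γ : LFmls m) : ℕ := (seqLabels R Γ).sup + 1

theorem freshLab_fresh {m : ℕ} (R : RAtoms m) (Γ : LFmls m) :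
    freshIn (freshLab R Γ) R Γ := by
  have key : ∀ l ∈ seqLabels R Γ, l ≠ freshLab R Γ := by
    intro l hl
    have := Multiset.le_sup (α := ℕ) hl
    simp only [freshLab]; omega
  constructor
  · intro a ha
    constructor
    · exact key _ (Multiset.mem_add.mpr (Or.inl (Multiset.mem_add.mpr
        (Or.inl (Multiset.mem_map.mpr ⟨a, ha, rfl⟩)))))
    · exact key _ (Multiset.mem_add.mpr (Or.inl (Multiset.mem_add.mpr
        (Or.inr (Multiset.mem_map.mpr ⟨a, ha, rfl⟩)))))
  · intro e he
    exact key _ (Multiset.mem_add.mpr (Or.inr (Multiset.mem_map.mpr ⟨e, he, rfl⟩)))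
/-- Non-derivability of a sequent in `Ldm_n^m L`. -/
def NDS (n m : ℕ) (R : RAtoms m) (Γ : LFmls m) : Prop := ¬ Seq LdmLflags n m R Γ

/-- Postcondition guaranteed when processing a task. -/
def Post (n m : ℕ) : Task n m → RAtoms m × LFmls m → RAtoms m × LFmls m → Prop
  | .tAnd w φ ψ, S, S' => (w, Fml.and φ ψ) ∈ S.2 → ((w, φ) ∈ S'.2 ∨ (w, ψ) ∈ S'.2)
  | .tOr w φ ψ, S, S' => (w, Fml.or φ ψ) ∈ S.2 → ((w, φ) ∈ S'.2 ∧ (w, ψ) ∈ S'.2)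
  | .tBox w φ, S, S' => (w, Fml.box φ) ∈ S.2 → ∃ v, (v, φ) ∈ S'.2
  | .tDia w φ u, S, S' => (w, Fml.dia φ) ∈ S.2 → (u, φ) ∈ S'.2
  | .tAg w i φ, S, S' => (w, Fml.ag i φ) ∈ S.2 →
      ∃ v, ((i, w, v) : RAtom m) ∈ S'.1 ∧ (v, φ) ∈ S'.2
  | .tDag w i φ u, S, S' => (w, Fml.dag i φ) ∈ S.2 → Reach S.1 i w u → (u, φ) ∈ S'.2
  | .tIoa u, _, S' => ∃ v, ∀ i, ((i, u i, v) : RAtom m) ∈ S'.1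
  | .tApc i w, _, S' => 0 < n → ∃ k j : Fin (n+1), k < j ∧ ((i, w k, w j) : RAtom m) ∈ S'.1

theorem cons_perm3 {α : Type _} (a b c : α) (s : Multiset α) :
    a ::ₘ b ::ₘ c ::ₘ s = b ::ₘ c ::ₘ a ::ₘ s := by
  rw [Multiset.cons_swap a b, Multiset.cons_swap a c]

theorem step_ex {n m : ℕ} (t : Task n m) (R : RAtoms m) (Γ : LFmls m)
    (hS : NDS n m R Γ) :
    ∃ S' : RAtoms m × LFmls m,
      NDS n m S'.1 S'.2 ∧ R ≤ S'.1 ∧ Γ ≤ S'.2 ∧ Post n m t (R, Γ) S' := by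
  cases t with
  | tAnd w φ ψ =>
    by_cases hmem : (w, Fml.and φ ψ) ∈ Γ
    · have hΓ := Multiset.cons_erase hmem
      have hnd : NDS n m R ((w, φ) ::ₘ Γ) ∨ NDS n m R ((w, ψ) ::ₘ Γ) := by
        by_contra hc
        simp only [NDS, not_or, not_not] at hc
        obtain ⟨⟨h1, d1⟩, ⟨h2, d2⟩⟩ := hc
        refine hS ⟨max h1 h2 + 1, ?_⟩
        rw [← hΓ]
        refine SeqH.andR ?_ ?_
        · rw [Multiset.cons_swap, hΓ]; exact d1.mono (le_max_left _ _)
        · rw [Multiset.cons_swap, hΓ]; exact d2.mono (le_max_right _ _)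
      rcases hnd with h | h
      · exact ⟨(R, (w, φ) ::ₘ Γ), h, le_refl _, Multiset.le_cons_self _ _,
          fun _ => Or.inl (Multiset.mem_cons_self _ _)⟩
      · exact ⟨(R, (w, ψ) ::ₘ Γ), h, le_refl _, Multiset.le_cons_self _ _,
          fun _ => Or.inr (Multiset.mem_cons_self _ _)⟩
    · exact ⟨(R, Γ), hS, le_refl _, le_refl _, fun h => absurd h hmem⟩
  | tOr w φ ψ =>
    by_cases hmem : (w, Fml.or φ ψ) ∈ Γ
    · have hΓ := Multiset.cons_erase hmem
      have hnd : NDS n m R ((w, φ) ::ₘ (w, ψ) ::ₘ Γ) := by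
        rintro ⟨h, d⟩
        refine hS ⟨h + 1, ?_⟩
        rw [← hΓ]
        refine SeqH.orR ?_
        rw [cons_perm3, hΓ]; exact d
      exact ⟨(R, (w, φ) ::ₘ (w, ψ) ::ₘ Γ), hnd, le_refl _,
        le_trans (Multiset.le_cons_self _ _) (Multiset.le_cons_self _ _),
        fun _ => ⟨Multiset.mem_cons_self _ _,
          Multiset.mem_cons_of_mem (Multiset.mem_cons_self _ _)⟩⟩
    · exact ⟨(R, Γ), hS, le_refl _, le_refl _, fun h => absurd h hmem⟩
  | tBox w φ =>
    by_cases hmem : (w, Fml.box φ) ∈ Γ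
    · have hΓ := Multiset.cons_erase hmem
      set v := freshLab R Γ with hv
      have hfresh : freshIn v R ((w, Fml.box φ) ::ₘ Γ.erase (w, Fml.box φ)) := by
        rw [hΓ]; exact freshLab_fresh R Γ
      have hnd : NDS n m R ((v, φ) ::ₘ Γ) := by
        rintro ⟨h, d⟩
        refine hS ⟨h + 1, ?_⟩
        rw [← hΓ]
        refine SeqH.boxR hfresh ?_
        rw [Multiset.cons_swap, hΓ]; exact d
      exact ⟨(R, (v, φ) ::ₘ Γ), hnd, le_refl _, Multiset.le_cons_self _ _,
        fun _ => ⟨v, Multiset.mem_cons_self _ _⟩⟩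
    · exact ⟨(R, Γ), hS, le_refl _, le_refl _, fun h => absurd h hmem⟩
  | tDia w φ u =>
    by_cases hmem : (w, Fml.dia φ) ∈ Γ
    · have hΓ := Multiset.cons_erase hmem
      have hnd : NDS n m R ((u, φ) ::ₘ Γ) := by
        rintro ⟨h, d⟩
        refine hS ⟨h + 1, ?_⟩
        rw [← hΓ]
        refine SeqH.diaR (u := u) ?_
        rw [Multiset.cons_swap, hΓ]; exact d
      exact ⟨(R, (u, φ) ::ₘ Γ), hnd, le_refl _, Multiset.le_cons_self _ _,
        fun _ => Multiset.mem_cons_self _ _⟩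
    · exact ⟨(R, Γ), hS, le_refl _, le_refl _, fun h => absurd h hmem⟩
  | tAg w i φ =>
    by_cases hmem : (w, Fml.ag i φ) ∈ Γ
    · have hΓ := Multiset.cons_erase hmem
      set v := freshLab R Γ with hv
      have hfresh : freshIn v R ((w, Fml.ag i φ) ::ₘ Γ.erase (w, Fml.ag i φ)) := by
        rw [hΓ]; exact freshLab_fresh R Γ
      have hnd : NDS n m (((i, w, v) : RAtom m) ::ₘ R) ((v, φ) ::ₘ Γ) := by
        rintro ⟨h, d⟩
        refine hS ⟨h + 1, ?_⟩
        rw [← hΓ]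
        refine SeqH.agRKeep rfl hfresh ?_
        rw [Multiset.cons_swap, hΓ]; exact d
      exact ⟨(((i, w, v) : RAtom m) ::ₘ R, (v, φ) ::ₘ Γ), hnd,
        Multiset.le_cons_self _ _, Multiset.le_cons_self _ _,
        fun _ => ⟨v, Multiset.mem_cons_self _ _, Multiset.mem_cons_self _ _⟩⟩
    · exact ⟨(R, Γ), hS, le_refl _, le_refl _, fun h => absurd h hmem⟩
  | tDag w i φ u =>
    by_cases hmem : (w, Fml.dag i φ) ∈ Γ ∧ Reach R i w u
    · obtain ⟨hmem, hreach⟩ := hmem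
      have hΓ := Multiset.cons_erase hmem
      have hnd : NDS n m R ((u, φ) ::ₘ Γ) := by
        rintro ⟨h, d⟩
        refine hS ⟨h + 1, ?_⟩
        rw [← hΓ]
        refine SeqH.prR rfl hreach ?_
        rw [Multiset.cons_swap, hΓ]; exact d
      exact ⟨(R, (u, φ) ::ₘ Γ), hnd, le_refl _, Multiset.le_cons_self _ _,
        fun _ _ => Multiset.mem_cons_self _ _⟩
    · exact ⟨(R, Γ), hS, le_refl _, le_refl _,
        fun h1 h2 => absurd ⟨h1, h2⟩ hmem⟩
  | tIoa u =>
    set v := freshLab R Γ with hv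
    have hfresh : freshIn v R Γ := freshLab_fresh R Γ
    have hnd : NDS n m (ioaAtoms u v + R) Γ := by
      rintro ⟨h, d⟩
      exact hS ⟨h + 1, SeqH.ioaR rfl u v hfresh d⟩
    refine ⟨(ioaAtoms u v + R, Γ), hnd, Multiset.le_add_left _ _, le_refl _, ?_⟩
    refine ⟨v, fun i => ?_⟩
    refine Multiset.mem_add.mpr (Or.inl ?_)
    show ((i, u i, v) : RAtom m) ∈ Multiset.ofList _
    rw [Multiset.mem_coe]
    exact List.mem_map.mpr ⟨i, List.mem_finRange i, rfl⟩
  | tApc i w =>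
    by_cases hn : 0 < n
    · have hex : ∃ k j : Fin (n+1), k < j ∧
          NDS n m (((i, w k, w j) : RAtom m) ::ₘ R) Γ := by
        by_contra hc
        push_neg at hc
        simp only [NDS, not_not] at hc
        have hder : ∀ k j : Fin (n+1), k < j →
            Seq LdmLflags n m (((i, w k, w j) : RAtom m) ::ₘ R) Γ := by
          intro k j hkj
          exact hc k j hkj
        set F : Fin (n+1) × Fin (n+1) → ℕ := fun p =>
          if hp : p.1 < p.2 then (hder p.1 p.2 hp).choose else 0 with hF
        set H : ℕ := Finset.univ.sup F with hH
        refine hS ⟨H + 1, SeqH.apcR hn i w ?_⟩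
        intro k j hkj
        have hd := (hder k j hkj).choose_spec
        have hle : F (k, j) ≤ H := Finset.le_sup (Finset.mem_univ (k, j))
        rw [hF] at hle
        simp only [hkj, dif_pos] at hle
        exact hd.mono hle
      obtain ⟨k, j, hkj, hnd⟩ := hex
      exact ⟨(((i, w k, w j) : RAtom m) ::ₘ R, Γ), hnd, Multiset.le_cons_self _ _,
        le_refl _, fun _ => ⟨k, j, hkj, Multiset.mem_cons_self _ _⟩⟩
    · exact ⟨(R, Γ), hS, le_refl _, le_refl _, fun h => absurd h hn⟩
/-- The stages of fair proof search. -/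
noncomputable def stages {n m : ℕ} (g : ℕ → Task n m) (S0 : RAtoms m × LFmls m)
    (h0 : NDS n m S0.1 S0.2) : ℕ → {S : RAtoms m × LFmls m // NDS n m S.1 S.2}
  | 0 => ⟨S0, h0⟩
  | s + 1 =>
    let p := stages g S0 h0 s
    ⟨(step_ex (g s) p.1.1 p.1.2 p.2).choose,
     (step_ex (g s) p.1.1 p.1.2 p.2).choose_spec.1⟩

theorem stages_spec {n m : ℕ} (g : ℕ → Task n m) (S0 : RAtoms m × LFmls m)
    (h0 : NDS n m S0.1 S0.2) (s : ℕ) :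
    (stages g S0 h0 s).1.1 ≤ (stages g S0 h0 (s+1)).1.1 ∧
    (stages g S0 h0 s).1.2 ≤ (stages g S0 h0 (s+1)).1.2 ∧
    Post n m (g s) (stages g S0 h0 s).1 (stages g S0 h0 (s+1)).1 := by
  have h := (step_ex (g s) (stages g S0 h0 s).1.1 (stages g S0 h0 s).1.2
    (stages g S0 h0 s).2).choose_spec
  exact ⟨h.2.1, h.2.2.1, h.2.2.2⟩

theorem stages_mono {n m : ℕ} (g : ℕ → Task n m) (S0 : RAtoms m × LFmls m)
    (h0 : NDS n m S0.1 S0.2) {s s' : ℕ} (hle : s ≤ s') :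
    (stages g S0 h0 s).1.1 ≤ (stages g S0 h0 s').1.1 ∧
    (stages g S0 h0 s).1.2 ≤ (stages g S0 h0 s').1.2 := by
  induction hle with
  | refl => exact ⟨le_refl _, le_refl _⟩
  | @step k h ih =>
    have := stages_spec g S0 h0 k
    exact ⟨le_trans ih.1 this.1, le_trans ih.2 this.2.1⟩
/-- Cut-free completeness of `Ldm_n^m L`: if `⊩ φ` then `x:φ` is
derivable in `Ldm_n^m L`, for any label `x`. -/
theorem ldmL_cut_free_completeness (n m : ℕ) (hm : 1 ≤ m)
    (φ : Fml m) (hv : Valid n m φ) (x : ℕ) :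
    Seq LdmLflags n m 0 {(x, φ)} := by
  classical
  by_contra hnd
  set S0 : RAtoms m × LFmls m := ((0 : RAtoms m), ({(x, φ)} : LFmls m)) with hS0
  have h0 : NDS n m S0.1 S0.2 := hnd
  obtain ⟨f, hf⟩ := exists_surjective_nat (Task n m)
  set g : ℕ → Task n m := fun k => f (Nat.unpair k).2 with hg
  have fair : ∀ (t : Task n m) (s0 : ℕ), ∃ s, s0 ≤ s ∧ g s = t := by
    intro t s0
    obtain ⟨i, hi⟩ := hf t
    exact ⟨Nat.pair s0 i, Nat.left_le_pair _ _, by simp [hg, Nat.unpair_pair, hi]⟩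
  set st : ℕ → {S : RAtoms m × LFmls m // NDS n m S.1 S.2} := stages g S0 h0 with hst
  have mono : ∀ {s s' : ℕ}, s ≤ s' →
      (st s).1.1 ≤ (st s').1.1 ∧ (st s).1.2 ≤ (st s').1.2 :=
    fun hle => stages_mono g S0 h0 hle
  have spec : ∀ s : ℕ, Post n m (g s) (st s).1 (st (s+1)).1 :=
    fun s => (stages_spec g S0 h0 s).2.2
  -- consistency of the limit
  have consis : ∀ (w p : ℕ), ¬ ((∃ s, (w, Fml.pos p) ∈ (st s).1.2) ∧
      (∃ s, (w, Fml.neg p) ∈ (st s).1.2)) := by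
    rintro w p ⟨⟨s1, h1⟩, ⟨s2, h2⟩⟩
    have hp : (w, Fml.pos p) ∈ (st (max s1 s2)).1.2 :=
      Multiset.mem_of_le (mono (le_max_left s1 s2)).2 h1
    have hq : (w, Fml.neg p) ∈ (st (max s1 s2)).1.2 :=
      Multiset.mem_of_le (mono (le_max_right s1 s2)).2 h2
    have hne : ((w, Fml.neg p) : LFml m) ≠ (w, Fml.pos p) := by simp
    have hq' : ((w, Fml.neg p) : LFml m) ∈
        ((st (max s1 s2)).1.2).erase (w, Fml.pos p) :=
      (Multiset.mem_erase_of_ne hne).mpr hq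
    have e1 := Multiset.cons_erase hp
    have e2 := Multiset.cons_erase hq'
    refine (st (max s1 s2)).2 ⟨0, ?_⟩
    rw [← e1, ← e2]
    exact SeqH.id w p
  -- the countermodel
  let M : ModelOn n m ℕ := {
    nonemp := ⟨0⟩
    rel := fun i a b => ∃ s, Reach (st s).1.1 i a b
    refl := fun i w => ⟨0, Reach.refl w⟩
    symm := fun i w u h => h.elim fun s hs => ⟨s, hs.symm'⟩
    trans := fun i w u v h1 h2 => by
      obtain ⟨s1, hs1⟩ := h1; obtain ⟨s2, hs2⟩ := h2
      exact ⟨max s1 s2, Reach.trans'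
        (hs1.mono (mono (le_max_left s1 s2)).1)
        (hs2.mono (mono (le_max_right s1 s2)).1)⟩
    ioa := fun u => by
      obtain ⟨s, _, hgs⟩ := fair (.tIoa u) 0
      have post := spec s
      rw [hgs] at post
      simp only [Post] at post
      obtain ⟨v, hv'⟩ := post
      exact ⟨v, fun i => ⟨s+1, Reach.fwd (Reach.refl _) (hv' i)⟩⟩
    apc := fun hn i w => by
      obtain ⟨s, _, hgs⟩ := fair (.tApc i w) 0
      have post := spec s
      rw [hgs] at post
      simp only [Post] at post
      obtain ⟨k, j, hkj, hmem⟩ := post hn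
      exact ⟨k, j, hkj, ⟨s+1, Reach.fwd (Reach.refl _) hmem⟩⟩
    val := fun p => {w | ∃ s, (w, Fml.neg p) ∈ (st s).1.2}
  }
  -- truth lemma: formulas in the limit are falsified
  have truth : ∀ (ψ : Fml m) (w : ℕ), (∃ s, (w, ψ) ∈ (st s).1.2) → ¬ Sat M w ψ := by
    intro ψ
    induction ψ with
    | pos p =>
      intro w hw hsat
      simp only [Sat] at hsat
      exact consis w p ⟨hw, hsat⟩
    | neg p =>
      intro w hw hsat
      simp only [Sat] at hsat
      exact hsat hw
    | and φ1 φ2 ih1 ih2 =>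
      intro w hw hsat
      simp only [Sat] at hsat
      obtain ⟨s0, hmem⟩ := hw
      obtain ⟨s, hs0, hgs⟩ := fair (.tAnd w φ1 φ2) s0
      have post := spec s
      rw [hgs] at post
      simp only [Post] at post
      have hmem' : (w, Fml.and φ1 φ2) ∈ (st s).1.2 :=
        Multiset.mem_of_le (mono hs0).2 hmem
      rcases post hmem' with h | h
      · exact ih1 w ⟨s+1, h⟩ hsat.1
      · exact ih2 w ⟨s+1, h⟩ hsat.2
    | or φ1 φ2 ih1 ih2 =>
      intro w hw hsat
      simp only [Sat] at hsat
      obtain ⟨s0, hmem⟩ := hw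
      obtain ⟨s, hs0, hgs⟩ := fair (.tOr w φ1 φ2) s0
      have post := spec s
      rw [hgs] at post
      simp only [Post] at post
      have hmem' : (w, Fml.or φ1 φ2) ∈ (st s).1.2 :=
        Multiset.mem_of_le (mono hs0).2 hmem
      obtain ⟨ha, hb⟩ := post hmem'
      rcases hsat with h | h
      · exact ih1 w ⟨s+1, ha⟩ h
      · exact ih2 w ⟨s+1, hb⟩ h
    | box φ1 ih =>
      intro w hw hsat
      simp only [Sat] at hsat
      obtain ⟨s0, hmem⟩ := hw
      obtain ⟨s, hs0, hgs⟩ := fair (.tBox w φ1) s0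
      have post := spec s
      rw [hgs] at post
      simp only [Post] at post
      have hmem' : (w, Fml.box φ1) ∈ (st s).1.2 :=
        Multiset.mem_of_le (mono hs0).2 hmem
      obtain ⟨v, hv'⟩ := post hmem'
      exact ih v ⟨s+1, hv'⟩ (hsat v)
    | dia φ1 ih =>
      intro w hw hsat
      simp only [Sat] at hsat
      obtain ⟨u, hu⟩ := hsat
      obtain ⟨s0, hmem⟩ := hw
      obtain ⟨s, hs0, hgs⟩ := fair (.tDia w φ1 u) s0
      have post := spec s
      rw [hgs] at post
      simp only [Post] at post
      have hmem' : (w, Fml.dia φ1) ∈ (st s).1.2 :=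
        Multiset.mem_of_le (mono hs0).2 hmem
      exact ih u ⟨s+1, post hmem'⟩ hu
    | ag i φ1 ih =>
      intro w hw hsat
      simp only [Sat] at hsat
      obtain ⟨s0, hmem⟩ := hw
      obtain ⟨s, hs0, hgs⟩ := fair (.tAg w i φ1) s0
      have post := spec s
      rw [hgs] at post
      simp only [Post] at post
      have hmem' : (w, Fml.ag i φ1) ∈ (st s).1.2 :=
        Multiset.mem_of_le (mono hs0).2 hmem
      obtain ⟨v, hatom, hvφ⟩ := post hmem'
      have hrel : M.rel i w v := ⟨s+1, Reach.fwd (Reach.refl w) hatom⟩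
      exact ih v ⟨s+1, hvφ⟩ (hsat v hrel)
    | dag i φ1 ih =>
      intro w hw hsat
      simp only [Sat] at hsat
      obtain ⟨u, hrel, hu⟩ := hsat
      obtain ⟨s1, hreach⟩ := hrel
      obtain ⟨s0, hmem⟩ := hw
      obtain ⟨s, hs, hgs⟩ := fair (.tDag w i φ1 u) (max s0 s1)
      have post := spec s
      rw [hgs] at post
      simp only [Post] at post
      have hmem' : (w, Fml.dag i φ1) ∈ (st s).1.2 :=
        Multiset.mem_of_le (mono (le_trans (le_max_left s0 s1) hs)).2 hmem
      have hreach' : Reach (st s).1.1 i w u :=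
        hreach.mono (mono (le_trans (le_max_right s0 s1) hs)).1
      exact ih u ⟨s+1, post hmem' hreach'⟩ hu
  have hx : ∃ s, (x, φ) ∈ (st s).1.2 := ⟨0, by
    show (x, φ) ∈ (stages g S0 h0 0).1.2
    simp [stages, hS0]⟩
  exact truth φ x hx (hv ℕ M x)

end Stit
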